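/- Let α be a type, n : ℕ, and rd : α → ℕ a round assignment. For each i < n let lᵢ be a finite list over α such that the values rd x for x along lᵢ are nondecreasing. For each r : ℕ let T_r be a set of finite lists over α (a sequential specification), and suppose that for each round r occurring in some lᵢ there exists a word w_r ∈ T_r that is a shuffle of the n lists lᵢ.filter (fun x => rd x = r). Then there exists a word w that is a shuffle of l₀, …, l_{n−1} such that for every such round r, w.filter (fun x => rd x = r) ∈ T_r. (Finite-history form of the paper's Proposition 2: if each round's sub-history is sequentially consistent with respect to its own specification and rounds are nondecreasing along each process, the whole history is sequentially consistent with respect to the composition of the specifications.) -/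

import Mathlib

/-- `w` is a shuffle (interleaving) of the family of lists `l i`, `i : Fin n`:
there is a tagged list whose projection is `w` and whose `i`-tagged sublist is `l i`. -/
def IsInterleaving {α : Type*} {n : ℕ} (l : Fin n → List α) (w : List α) : Prop :=
  ∃ tl : List (Fin n × α), w = tl.map Prod.snd ∧
    ∀ i : Fin n, (tl.filter (fun p => p.1 = i)).map Prod.snd = l i

private lemma flatMap_filter_comm {α β : Type*} (R : List β) (f : β → List α) (p : α → Bool) :
    (R.flatMap f).filter p = R.flatMap (fun r => (f r).filter p) := by
  induction R with
  | nil => simp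
  | cons r R ih => simp [List.flatMap_cons, List.filter_append, ih]

private lemma flatMap_congr {α β : Type*} {R : List β} {f g : β → List α}
    (h : ∀ r ∈ R, f r = g r) : R.flatMap f = R.flatMap g := by
  induction R with
  | nil => simp
  | cons r R ih =>
    simp only [List.flatMap_cons]
    rw [h r (by simp), ih (fun r hr => h r (by simp [hr]))]

private lemma flatMap_single {α : Type*} {R : List ℕ} {r : ℕ} {c : List α}
    (hnd : R.Nodup) (hr : r ∈ R) :
    R.flatMap (fun r' => if r' = r then c else []) = c := by
  induction R with
  | nil => simp at hr
  | cons a R ih =>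
    by_cases ha : a = r
    · subst ha
      have hz : R.flatMap (fun r' => if r' = a then c else []) = [] := by
        rw [List.flatMap_eq_nil_iff]
        intro x hx
        have hxa : x ≠ a := fun h => (List.nodup_cons.mp hnd).1 (h ▸ hx)
        simp [hxa]
      rw [List.flatMap_cons, if_pos rfl, hz, List.append_nil]
    · have hr' : r ∈ R := by
        rcases List.mem_cons.mp hr with h | h
        · exact absurd h.symm ha
        · exact h
      rw [List.flatMap_cons, if_neg ha, List.nil_append,
        ih (List.nodup_cons.mp hnd).2 hr']

private lemma decomp {α : Type*} (rd : α → ℕ) :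
    ∀ (R : List ℕ) (L : List α), L.Pairwise (fun a b => rd a ≤ rd b) →
      R.Pairwise (· < ·) → (∀ x ∈ L, rd x ∈ R) →
      R.flatMap (fun r => L.filter (fun x => rd x = r)) = L := by
  intro R
  induction R with
  | nil =>
    intro L _ _ hsub
    have : L = [] := List.eq_nil_iff_forall_not_mem.mpr fun x hx => by simpa using hsub x hx
    simp [this]
  | cons r R ih =>
    intro L
    induction L with
    | nil => intro _ _ _; simp
    | cons a L ihL =>
      intro hpw hsort hsub
      have hle : ∀ b ∈ L, rd a ≤ rd b := (List.pairwise_cons.mp hpw).1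
      have hpw' : L.Pairwise (fun a b => rd a ≤ rd b) := hpw.of_cons
      have hlt : ∀ r' ∈ R, r < r' := (List.pairwise_cons.mp hsort).1
      by_cases h : rd a = r
      · -- head is in round r
        have hfil : ∀ r' ∈ R, (a :: L).filter (fun x => rd x = r') = L.filter (fun x => rd x = r') := by
          intro r' hr'
          have : rd a ≠ r' := by have := hlt r' hr'; omega
          simp [List.filter_cons, this]
        have hrec : (r :: R).flatMap (fun r' => L.filter (fun x => rd x = r')) = L := by
          apply ihL hpw' hsort
          intro x hx
          exact hsub x (by simp [hx])
        calc (r :: R).flatMap (fun r' => (a :: L).filter (fun x => rd x = r'))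
            = (a :: L).filter (fun x => rd x = r) ++
                R.flatMap (fun r' => (a :: L).filter (fun x => rd x = r')) := by
              rw [List.flatMap_cons]
          _ = a :: (L.filter (fun x => rd x = r) ++
                R.flatMap (fun r' => L.filter (fun x => rd x = r'))) := by
              rw [flatMap_congr hfil, List.filter_cons]
              simp [h]
          _ = a :: L := by rw [List.flatMap_cons] at hrec; rw [hrec]
      · -- head is in a later round
        have har : rd a ∈ R := by
          have := hsub a (by simp)
          rcases List.mem_cons.mp this with h' | h'
          · exact absurd h' h
          · exact h'
        have hra : r < rd a := hlt _ har
        have hnone : (a :: L).filter (fun x => rd x = r) = [] := by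
          rw [List.filter_eq_nil_iff]
          intro x hx
          rcases List.mem_cons.mp hx with rfl | hx'
          · simp; omega
          · have := hle x hx'; simp; omega
        have hsub' : ∀ x ∈ a :: L, rd x ∈ R := by
          intro x hx
          have h1 : rd x ∈ r :: R := hsub x hx
          have h2 : r < rd x := by
            rcases List.mem_cons.mp hx with rfl | hx'
            · exact hra
            · exact lt_of_lt_of_le hra (hle x hx')
          rcases List.mem_cons.mp h1 with h' | h'
          · omega
          · exact h'
        rw [List.flatMap_cons, hnone, List.nil_append]
        exact ih (a :: L) hpw (List.pairwise_cons.mp hsort).2 hsub'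

/-- **Round-based composition of sequential consistency (finite-history form).**
If rounds are nondecreasing along each process list and, for every round `r` occurring in
the history, some word of `T r` interleaves the round-`r` sublists of the processes, then
some interleaving of the whole process lists has all its round-`r` sublists in `T r`. -/
theorem round_based_composition_lists
    {α : Type*} {n : ℕ} (rd : α → ℕ) (l : Fin n → List α)
    (hmono : ∀ i : Fin n, (l i).Pairwise (fun a b => rd a ≤ rd b))
    (T : ℕ → Set (List α))
    (hround : ∀ r : ℕ, (∃ i : Fin n, ∃ x ∈ l i, rd x = r) →
      ∃ w : List α,
        IsInterleaving (fun i => (l i).filter (fun x => rd x = r)) w ∧ w ∈ T r) :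
    ∃ w : List α, IsInterleaving l w ∧
      ∀ r : ℕ, (∃ i : Fin n, ∃ x ∈ l i, rd x = r) →
        w.filter (fun x => rd x = r) ∈ T r := by
  classical
  set occ : ℕ → Prop := fun r => ∃ i : Fin n, ∃ x ∈ l i, rd x = r with hocc
  choose w hw hwT using hround
  simp only [IsInterleaving] at hw
  choose tl htlw htlf using hw
  set S : Finset ℕ := Finset.univ.biUnion (fun i : Fin n => ((l i).map rd).toFinset) with hS
  set R : List ℕ := S.sort (· ≤ ·) with hR
  have hmemR : ∀ r : ℕ, r ∈ R ↔ occ r := by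
    intro r
    rw [hR, Finset.mem_sort, hS, Finset.mem_biUnion]
    constructor
    · rintro ⟨i, -, hi⟩
      rw [List.mem_toFinset, List.mem_map] at hi
      obtain ⟨x, hx, hrx⟩ := hi
      exact ⟨i, x, hx, hrx⟩
    · rintro ⟨i, x, hx, hrx⟩
      exact ⟨i, Finset.mem_univ i, List.mem_toFinset.mpr (List.mem_map.mpr ⟨x, hx, hrx⟩)⟩
  have hsorted : R.Pairwise (· < ·) := (Finset.sortedLT_sort S).pairwise
  have hnd : R.Nodup := Finset.sort_nodup S _
  set tl' : ℕ → List (Fin n × α) := fun r => if h : occ r then tl r h else [] with htl'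
  set TL : List (Fin n × α) := R.flatMap tl' with hTL
  have htl'eq : ∀ r (h : occ r), tl' r = tl r h := by
    intro r h; simp [htl', h]
  -- all elements of (tl r h) have round r
  have hkey : ∀ r (h : occ r), ∀ p ∈ tl r h, rd p.2 = r := by
    intro r h p hp
    have hpf : p ∈ (tl r h).filter (fun q => q.1 = p.1) :=
      List.mem_filter.mpr ⟨hp, by simp⟩
    have : p.2 ∈ ((tl r h).filter (fun q => q.1 = p.1)).map Prod.snd :=
      List.mem_map.mpr ⟨p, hpf, rfl⟩
    rw [htlf r h p.1] at this
    simpa using (List.mem_filter.mp this).2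
  refine ⟨TL.map Prod.snd, ⟨TL, rfl, ?_⟩, ?_⟩
  · -- interleaving of the full lists
    intro i
    rw [hTL, flatMap_filter_comm, List.map_flatMap]
    have h1 : ∀ r ∈ R, ((tl' r).filter (fun p => p.1 = i)).map Prod.snd
        = (l i).filter (fun x => rd x = r) := by
      intro r hr
      have h := (hmemR r).mp hr
      rw [htl'eq r h, htlf r h i]
    rw [flatMap_congr h1]
    apply decomp rd R (l i) (hmono i) hsorted
    intro x hx
    exact (hmemR (rd x)).mpr ⟨i, x, hx, rfl⟩
  · -- each round sublist in its spec
    intro r h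
    have hrR : r ∈ R := (hmemR r).mpr h
    show ((R.flatMap tl').map Prod.snd).filter (fun x => rd x = r) ∈ T r
    rw [List.map_flatMap, flatMap_filter_comm]
    have h1 : ∀ r' ∈ R, ((tl' r').map Prod.snd).filter (fun x => rd x = r)
        = if r' = r then (tl r h).map Prod.snd else [] := by
      intro r' hr'
      have h' := (hmemR r').mp hr'
      rw [htl'eq r' h']
      by_cases he : r' = r
      · subst he
        rw [if_pos rfl, List.filter_eq_self]
        intro x hx
        obtain ⟨p, hp, rfl⟩ := List.mem_map.mp hx
        simp [hkey r' h' p hp]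
      · rw [if_neg he, List.filter_eq_nil_iff]
        intro x hx
        obtain ⟨p, hp, rfl⟩ := List.mem_map.mp hx
        simp [hkey r' h' p hp, he]
    rw [flatMap_congr h1, flatMap_single hnd hrR, ← htlw r h]
    exact hwT r h
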